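/- Under the LATE assumptions and EMCO, with κ_(0) := 1(D=0)·((1−Z) − P(Z=0))/(P(Z=0)·P(Z=1)) and any bounded measurable g: E[κ_(0)·g(Y)] / P(D(1)>D(0)) = E[g(Y(0)) | D(1)>D(0)=0], provided P(D(1)>D(0)) > 0. -/

import Mathlib

open MeasureTheory ProbabilityTheory

variable {Ω : Type*}

/-- probability of a set -/
noncomputable def pr [MeasurableSpace Ω] (μ : MeasureTheory.Measure Ω) (A : Set Ω) : ℝ :=
  (μ A).toReal

/-- conditional probability P(A | B) -/
noncomputable def cP [MeasurableSpace Ω] (μ : MeasureTheory.Measure Ω) (A B : Set Ω) : ℝ :=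
  pr μ (A ∩ B) / pr μ B

/-- conditional expectation E[f | B] -/
noncomputable def cE [MeasurableSpace Ω] (μ : MeasureTheory.Measure Ω) (f : Ω → ℝ) (B : Set Ω) : ℝ :=
  (∫ ω in B, f ω ∂μ) / pr μ B

/-- observed treatment D = Z·D(1) + (1−Z)·D(0) -/
def obsD (Z D0 D1 : Ω → ℕ) : Ω → ℕ := fun ω => if Z ω = 1 then D1 ω else D0 ω

/-- observed outcome Y = Y(D) -/
noncomputable def obsY (Z D0 D1 : Ω → ℕ) (Yp : ℕ → Ω → ℝ) : Ω → ℝ :=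
  fun ω => Yp (obsD Z D0 D1 ω) ω

/-- kappa_(0) weighting identifies untreated moments of compliers
under LATE + EMCO. -/
theorem kappa_zero_identifies_untreated_moments
    [MeasurableSpace Ω] (μ : MeasureTheory.Measure Ω) [IsProbabilityMeasure μ]
    (Dbar : ℕ) (Z D0 D1 : Ω → ℕ) (Yp : ℕ → Ω → ℝ)
    (hZ01 : ∀ ω, Z ω = 0 ∨ Z ω = 1)
    (hZm : Measurable Z) (hD0m : Measurable D0) (hD1m : Measurable D1)
    (hD0b : ∀ ω, D0 ω ≤ Dbar) (hD1b : ∀ ω, D1 ω ≤ Dbar)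
    (hYm : ∀ d, Measurable (Yp d))
    (hindep : IndepFun (fun ω => (D0 ω, D1 ω, fun d => Yp d ω)) Z μ)
    (hmono : ∀ᵐ ω ∂μ, D0 ω ≤ D1 ω)
    (hemco : ∀ᵐ ω ∂μ, D0 ω < D1 ω → D0 ω = 0)
    (hZ1pos : 0 < pr μ {ω | Z ω = 1}) (hZ1lt : pr μ {ω | Z ω = 1} < 1)
    (hcomp : 0 < pr μ {ω | D0 ω < D1 ω})
    (g : ℝ → ℝ) (hgm : Measurable g) (hgb : ∃ C, ∀ x, |g x| ≤ C) :
    (∫ ω, (if obsD Z D0 D1 ω = 0 then (1 : ℝ) else 0) *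
          (((1 - (Z ω : ℝ)) - pr μ {ω' | Z ω' = 0}) /
            (pr μ {ω' | Z ω' = 0} * pr μ {ω' | Z ω' = 1})) *
        g (obsY Z D0 D1 Yp ω) ∂μ) /
      pr μ {ω | D0 ω < D1 ω} =
    cE μ (fun ω => g (Yp 0 ω)) {ω | D0 ω = 0 ∧ 0 < D1 ω} := by
  classical
  obtain ⟨C, hC⟩ := hgb
  have hC0 : 0 ≤ C := le_trans (abs_nonneg _) (hC 0)
  have hsZ1 : MeasurableSet {ω | Z ω = 1} := hZm (measurableSet_singleton 1)
  have hsZ0 : MeasurableSet {ω' | Z ω' = 0} := hZm (measurableSet_singleton 0)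
  set p1 := pr μ {ω | Z ω = 1} with hp1def
  set p0 := pr μ {ω' | Z ω' = 0} with hp0def
  have hcompl : {ω' | Z ω' = 0} = {ω | Z ω = 1}ᶜ := by
    ext ω
    simp only [Set.mem_compl_iff, Set.mem_setOf_eq]
    rcases hZ01 ω with h | h <;> simp [h]
  have hsum : p0 + p1 = 1 := by
    rw [hp0def, hp1def, pr, pr, hcompl,
      ← ENNReal.toReal_add (measure_ne_top _ _) (measure_ne_top _ _)]
    rw [add_comm, measure_add_measure_compl hsZ1, measure_univ, ENNReal.toReal_one]
  have hp0pos : 0 < p0 := by linarith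
  have hp0ne : p0 ≠ 0 := ne_of_gt hp0pos
  have hp1ne : p1 ≠ 0 := ne_of_gt hZ1pos
  -- the joint random vector
  set W : Ω → ℕ × ℕ × (ℕ → ℝ) := fun ω => (D0 ω, D1 ω, fun d => Yp d ω) with hWdef
  have hWm : Measurable W :=
    hD0m.prodMk (hD1m.prodMk (measurable_pi_lambda _ hYm))
  -- key independence fact
  have key : ∀ (φ : ℕ × ℕ × (ℕ → ℝ) → ℝ), Measurable φ → ∀ c : ℕ,
      ∫ ω in {ω | Z ω = c}, φ (W ω) ∂μ = pr μ {ω | Z ω = c} * ∫ ω, φ (W ω) ∂μ := by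
    intro φ hφ c
    have hψ : Measurable (fun z : ℕ => if z = c then (1:ℝ) else 0) :=
      measurable_from_nat
    have hsc : MeasurableSet {ω | Z ω = c} := hZm (measurableSet_singleton c)
    have hind2 : IndepFun (fun ω => φ (W ω)) (fun ω => if Z ω = c then (1:ℝ) else 0) μ :=
      hindep.comp hφ hψ
    have hmul := hind2.integral_mul_eq_mul_integral (hφ.comp hWm).aestronglyMeasurable
      (hψ.comp hZm).aestronglyMeasurable
    have h1 : ∫ ω, ((fun ω => φ (W ω)) * fun ω => if Z ω = c then (1:ℝ) else 0) ω ∂μ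
        = ∫ ω in {ω | Z ω = c}, φ (W ω) ∂μ := by
      rw [← integral_indicator hsc]
      congr 1
      ext ω
      by_cases h : Z ω = c <;>
        simp [Set.indicator_apply, Set.mem_setOf_eq, h]
    have h2 : ∫ ω, (if Z ω = c then (1:ℝ) else 0) ∂μ = pr μ {ω | Z ω = c} := by
      have : (fun ω => if Z ω = c then (1:ℝ) else 0)
          = Set.indicator {ω | Z ω = c} (fun _ => (1:ℝ)) := by
        ext ω; by_cases h : Z ω = c <;> simp [Set.indicator_apply, h]
      rw [this, integral_indicator hsc]
      simp [pr, Measure.real]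
    rw [h1, h2] at hmul
    rw [hmul, mul_comm]
  -- the two reduced functions
  set φ0 : ℕ × ℕ × (ℕ → ℝ) → ℝ := fun p => (if p.1 = 0 then 1 else 0) * g (p.2.2 0)
    with hφ0def
  set φ1 : ℕ × ℕ × (ℕ → ℝ) → ℝ := fun p => (if p.2.1 = 0 then 1 else 0) * g (p.2.2 0)
    with hφ1def
  have heval : Measurable (fun p : ℕ × ℕ × (ℕ → ℝ) => p.2.2 0) :=
    (measurable_pi_apply 0).comp (measurable_snd.comp measurable_snd)
  have hφ0m : Measurable φ0 := by
    apply Measurable.mul _ (hgm.comp heval)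
    exact Measurable.ite (measurable_fst (measurableSet_singleton 0)) measurable_const
      measurable_const
  have hφ1m : Measurable φ1 := by
    apply Measurable.mul _ (hgm.comp heval)
    exact Measurable.ite ((measurable_fst.comp measurable_snd) (measurableSet_singleton 0))
      measurable_const measurable_const
  have hbound0 : ∀ p, |φ0 p| ≤ C := by
    intro p
    rw [hφ0def]
    by_cases h : p.1 = 0 <;> simp [h, abs_mul, hC _, hC0]
  have hbound1 : ∀ p, |φ1 p| ≤ C := by
    intro p
    rw [hφ1def]
    by_cases h : p.2.1 = 0 <;> simp [h, abs_mul, hC _, hC0]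
  have hint0 : Integrable (fun ω => φ0 (W ω)) μ := by
    refine (integrable_const C).mono' (hφ0m.comp hWm).aestronglyMeasurable ?_
    exact Filter.Eventually.of_forall fun ω => by
      simpa using hbound0 (W ω)
  have hint1 : Integrable (fun ω => φ1 (W ω)) μ := by
    refine (integrable_const C).mono' (hφ1m.comp hWm).aestronglyMeasurable ?_
    exact Filter.Eventually.of_forall fun ω => by
      simpa using hbound1 (W ω)
  -- the integrand
  set f : Ω → ℝ := fun ω => (if obsD Z D0 D1 ω = 0 then (1 : ℝ) else 0) *
      (((1 - (Z ω : ℝ)) - p0) / (p0 * p1)) * g (obsY Z D0 D1 Yp ω) with hfdef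
  have hobsDm : Measurable (obsD Z D0 D1) :=
    Measurable.ite (hZm (measurableSet_singleton 1)) hD1m hD0m
  have hYpm : Measurable (fun p : Ω × ℕ => Yp p.2 p.1) :=
    measurable_from_prod_countable_left fun n => hYm n
  have hobsYm : Measurable (obsY Z D0 D1 Yp) :=
    hYpm.comp (measurable_id.prodMk hobsDm)
  have hfm : Measurable f := by
    apply Measurable.mul _ (hgm.comp hobsYm)
    apply Measurable.mul
    · exact Measurable.ite (hobsDm (measurableSet_singleton 0)) measurable_const
        measurable_const
    · apply Measurable.div _ measurable_const
      exact (measurable_const.sub (measurable_from_nat.comp hZm : Measurable fun ω => (Z ω : ℝ))).sub measurable_const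
  have hfint : Integrable f μ := by
    refine (integrable_const (1 / (p0 * p1) * C)).mono' hfm.aestronglyMeasurable ?_
    refine Filter.Eventually.of_forall fun ω => ?_
    rw [hfdef]
    simp only [Real.norm_eq_abs, abs_mul]
    have h1 : |if obsD Z D0 D1 ω = 0 then (1:ℝ) else 0| ≤ 1 := by
      by_cases h : obsD Z D0 D1 ω = 0 <;> simp [h]
    have h2 : |((1 - (Z ω : ℝ)) - p0) / (p0 * p1)| ≤ 1 / (p0 * p1) := by
      rw [abs_div, abs_of_pos (mul_pos hp0pos hZ1pos)]
      have hnum1 : |(1 - (Z ω : ℝ)) - p0| ≤ 1 := by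
        rcases hZ01 ω with h | h <;> rw [h] <;> push_cast <;>
          rw [abs_le] <;> constructor <;> linarith
      gcongr
    calc |if obsD Z D0 D1 ω = 0 then (1:ℝ) else 0| * |((1 - (Z ω : ℝ)) - p0) / (p0 * p1)|
          * |g (obsY Z D0 D1 Yp ω)|
        ≤ 1 * (1 / (p0 * p1)) * C := by
          apply mul_le_mul (mul_le_mul h1 h2 (abs_nonneg _) zero_le_one) (hC _)
            (abs_nonneg _)
          positivity
      _ = 1 / (p0 * p1) * C := by ring
  -- split the integral
  have hsplit : (∫ ω in {ω | Z ω = 1}, f ω ∂μ) + ∫ ω in {ω' | Z ω' = 0}, f ω ∂μ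
      = ∫ ω, f ω ∂μ := by
    rw [hcompl]; exact integral_add_compl hsZ1 hfint
  -- on Z = 1
  have hZ1part : (∫ ω in {ω | Z ω = 1}, f ω ∂μ) = -(∫ ω, φ1 (W ω) ∂μ) := by
    have heq : Set.EqOn f (fun ω => φ1 (W ω) * (-(1 / p1))) {ω | Z ω = 1} := by
      intro ω hω
      have hz : Z ω = 1 := hω
      rw [hfdef, hφ1def]
      simp only [obsD, obsY, hz, if_pos rfl, hWdef]
      by_cases h : D1 ω = 0
      · simp only [h, if_pos rfl]
        push_cast
        field_simp
        ring
      · simp [h]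
    rw [setIntegral_congr_fun hsZ1 heq, integral_mul_const, key φ1 hφ1m 1]
    rw [← hp1def]
    field_simp
  -- on Z = 0
  have hZ0part : (∫ ω in {ω' | Z ω' = 0}, f ω ∂μ) = ∫ ω, φ0 (W ω) ∂μ := by
    have heq : Set.EqOn f (fun ω => φ0 (W ω) * (1 / p0)) {ω' | Z ω' = 0} := by
      intro ω hω
      have hz : Z ω = 0 := hω
      have hz1 : Z ω ≠ 1 := by rw [hz]; omega
      rw [hfdef, hφ0def]
      simp only [obsD, obsY, if_neg hz1, hz, hWdef]
      by_cases h : D0 ω = 0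
      · simp only [h, if_pos rfl]
        push_cast
        have h15 : (1 : ℝ) - 0 - p0 = p1 := by linarith
        rw [h15]
        field_simp
      · simp [h]
    rw [setIntegral_congr_fun hsZ0 heq, integral_mul_const, key φ0 hφ0m 0]
    rw [← hp0def]
    field_simp
  -- combine
  have hnum : (∫ ω, f ω ∂μ)
      = ∫ ω in {ω | D0 ω = 0 ∧ 0 < D1 ω}, g (Yp 0 ω) ∂μ := by
    have hB : MeasurableSet {ω | D0 ω = 0 ∧ 0 < D1 ω} := by
      have : {ω | D0 ω = 0 ∧ 0 < D1 ω} = D0 ⁻¹' {0} ∩ D1 ⁻¹' {0}ᶜ := by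
        ext ω
        simp only [Set.mem_setOf_eq, Set.mem_inter_iff, Set.mem_preimage,
          Set.mem_compl_iff, Set.mem_singleton_iff]
        omega
      rw [this]
      exact (hD0m (measurableSet_singleton 0)).inter (hD1m (measurableSet_singleton 0).compl)
    rw [← hsplit, hZ1part, hZ0part, neg_add_eq_sub]
    rw [← integral_sub hint0 hint1, ← integral_indicator hB]
    apply integral_congr_ae
    filter_upwards [hmono] with ω hm
    rw [hφ0def, hφ1def, hWdef]
    simp only [Set.indicator_apply, Set.mem_setOf_eq]
    by_cases h0 : D0 ω = 0 <;> by_cases h1 : D1 ω = 0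
    · simp [h0, h1]
    · have hpos : 0 < D1 ω := Nat.pos_of_ne_zero h1
      simp [h0, h1, hpos]
    · omega
    · simp [h0, h1]
  have hden : pr μ {ω | D0 ω < D1 ω} = pr μ {ω | D0 ω = 0 ∧ 0 < D1 ω} := by
    rw [pr, pr]
    congr 1
    apply measure_congr
    rw [Filter.eventuallyEq_set]
    filter_upwards [hmono, hemco] with ω h1 h2
    constructor
    · intro h
      exact ⟨h2 h, by omega⟩
    · rintro ⟨ha, hb⟩
      omega
  rw [cE]
  rw [show (∫ ω, (if obsD Z D0 D1 ω = 0 then (1 : ℝ) else 0) *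
      (((1 - (Z ω : ℝ)) - p0) / (p0 * p1)) * g (obsY Z D0 D1 Yp ω) ∂μ) = ∫ ω, f ω ∂μ from rfl]
  rw [hnum, hden]
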